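/- Let G be a group, S a finite subset with 1 ∈ S, and M, N finite subgroups of G with N ⊆ M. If |M·S| − |M| ≤ |S| − 1, then |M·S| − |M| ≤ |N·S| − |N|. -/

import Mathlib

open scoped Pointwise

private lemma ncard_dvd_aux {G : Type*} [Group G] (N : Subgroup G)
    (hN : (N : Set G).Finite) :
    ∀ n (A : Set G), A.ncard = n → A.Finite → (N : Set G) * A = A →
      (N : Set G).ncard ∣ A.ncard := by
  intro n
  induction n using Nat.strong_induction_on with
  | _ n ih =>
    intro A hcard hA hNA
    rcases A.eq_empty_or_nonempty with rfl | ⟨g, hg⟩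
    · simp
    · set C : Set G := (N : Set G) * {g} with hC
      have hCsub : C ⊆ A := by
        rw [← hNA]
        exact Set.mul_subset_mul_left (by simpa using hg)
      have hCcard : C.ncard = (N : Set G).ncard := by
        rw [hC, Set.mul_singleton]
        exact Set.ncard_image_of_injective _ (mul_left_injective g)
      have hgC : g ∈ C := ⟨1, Subgroup.one_mem N, g, rfl, one_mul g⟩
      have hinv : (N : Set G) * (A \ C) = A \ C := by
        apply Set.Subset.antisymm
        · rintro x ⟨p, hp, a, ⟨haA, haC⟩, rfl⟩
          refine ⟨hNA ▸ Set.mul_mem_mul hp haA, fun hx => haC ?_⟩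
          rcases hx with ⟨q, hq, y, hy, hxy⟩
          simp only [Set.mem_singleton_iff] at hy
          refine ⟨p⁻¹ * q, N.mul_mem (N.inv_mem hp) hq, g, rfl, ?_⟩
          have h1 : q * g = p * a := by rw [← hy]; exact hxy
          show p⁻¹ * q * g = a
          rw [mul_assoc, h1, ← mul_assoc, inv_mul_cancel, one_mul]
        · intro x hx
          exact ⟨1, N.one_mem, x, hx, one_mul x⟩
      have hsplit : (A \ C).ncard + C.ncard = A.ncard :=
        Set.ncard_diff_add_ncard_of_subset hCsub hA
      have hNpos : 0 < (N : Set G).ncard :=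
        Set.ncard_pos hN |>.2 ⟨1, N.one_mem⟩
      have hlt : (A \ C).ncard < n := by
        omega
      have := ih _ hlt (A \ C) rfl hA.diff hinv
      rw [← hsplit]
      exact Nat.dvd_add this (hCcard ▸ dvd_rfl)

private lemma ncard_dvd_of_mul_eq {G : Type*} [Group G] (N : Subgroup G)
    (hN : (N : Set G).Finite) (A : Set G) (hA : A.Finite)
    (h : (N : Set G) * A = A) : (N : Set G).ncard ∣ A.ncard :=
  ncard_dvd_aux N hN _ A rfl hA h

theorem divisibility_step {G : Type*} [Group G] (S : Set G) (hS : S.Finite)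
    (hone : (1 : G) ∈ S) (M N : Subgroup G)
    (hMfin : (M : Set G).Finite) (hNfin : (N : Set G).Finite) (hNM : N ≤ M)
    (h : (((M : Set G) * S).ncard : ℤ) - (M : Set G).ncard ≤ (S.ncard : ℤ) - 1) :
    (((M : Set G) * S).ncard : ℤ) - (M : Set G).ncard ≤
      (((N : Set G) * S).ncard : ℤ) - (N : Set G).ncard := by
  have hNMmul : (N : Set G) * (M : Set G) = (M : Set G) := by
    apply Set.Subset.antisymm
    · calc (N : Set G) * (M : Set G) ⊆ (M : Set G) * (M : Set G) :=
            Set.mul_subset_mul_right (by exact_mod_cast hNM)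
        _ = (M : Set G) := coe_mul_coe M
    · intro x hx; exact ⟨1, N.one_mem, x, hx, one_mul x⟩
  have hd1 : (N : Set G).ncard ∣ ((M : Set G) * S).ncard := by
    apply ncard_dvd_of_mul_eq N hNfin _ (hMfin.mul hS)
    rw [← mul_assoc, hNMmul]
  have hd2 : (N : Set G).ncard ∣ (M : Set G).ncard := by
    apply ncard_dvd_of_mul_eq N hNfin _ hMfin hNMmul
  have hd3 : (N : Set G).ncard ∣ ((N : Set G) * S).ncard := by
    apply ncard_dvd_of_mul_eq N hNfin _ (hNfin.mul hS)
    rw [← mul_assoc, coe_mul_coe]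
  have hSsub : S ⊆ (N : Set G) * S := fun x hx => ⟨1, N.one_mem, x, hx, one_mul x⟩
  have hSle : S.ncard ≤ ((N : Set G) * S).ncard :=
    Set.ncard_le_ncard hSsub (hNfin.mul hS)
  -- integer arithmetic
  obtain ⟨k, hk⟩ := (Int.natCast_dvd_natCast.2 hd1).sub (Int.natCast_dvd_natCast.2 hd2)
  obtain ⟨m, hm⟩ := Int.natCast_dvd_natCast.2 hd3
  have hNpos : (0 : ℤ) < (N : Set G).ncard := by
    exact_mod_cast Set.ncard_pos hNfin |>.2 ⟨1, N.one_mem⟩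
  have hlt : ((N : Set G).ncard : ℤ) * k < ((N : Set G).ncard : ℤ) * m := by
    rw [← hk, ← hm]
    have : (S.ncard : ℤ) ≤ ((N : Set G) * S).ncard := by exact_mod_cast hSle
    omega
  have hkm : k < m := lt_of_mul_lt_mul_left hlt (le_of_lt hNpos)
  have : ((N : Set G).ncard : ℤ) * k ≤ ((N : Set G).ncard : ℤ) * (m - 1) :=
    mul_le_mul_of_nonneg_left (by omega) (le_of_lt hNpos)
  rw [hk]
  rw [hm]
  linarith [this]
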